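/- arXiv:1412.6456 — 2 statements merged into one kernel-verified Lean document; each statement's English description precedes it below -/
import Mathlib

section
/- Let R be a commutative noetherian local ring and M a finitely generated R-module. If M satisfies Serre's condition (S_1), then M is torsion-free, i.e., every non-zerodivisor of R is a non-zerodivisor on M. -/
open RingTheory.Sequence CategoryTheory

universe u

noncomputable section

/-- Depth of a module: supremum of lengths of weakly regular sequences consisting of nonunits.
For a f.g. module over a noetherian local ring this is the usual depth, and the zero module
has depth `⊤`. -/
def rdepth (A : Type u) [CommRing A] (M : Type u) [AddCommGroup M] [Module A M] : ℕ∞ :=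
  sSup {n : ℕ∞ | ∃ rs : List A, (rs.length : ℕ∞) = n ∧ (∀ r ∈ rs, r ∈ nonunits A) ∧
    RingTheory.Sequence.IsWeaklyRegular M rs}

/-- Serre's condition `(S_n)`. -/
def SerreCond (R : Type u) [CommRing R] (M : Type u) [AddCommGroup M] [Module R M] (n : ℕ) :
    Prop :=
  ∀ (p : Ideal R) (hp : p.IsPrime), Nontrivial (LocalizedModule p.primeCompl M) →
    min (n : ℕ∞) (Order.height (⟨p, hp⟩ : PrimeSpectrum R)) ≤
      rdepth (Localization.AtPrime p) (LocalizedModule p.primeCompl M)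

/-- `Tor_i^R(M, N)` as an object of `ModuleCat R`. -/
def TorModCat (R : Type u) [CommRing R] (i : ℕ) (M N : Type u) [AddCommGroup M] [Module R M]
    [AddCommGroup N] [Module R N] : ModuleCat.{u} R :=
  ((Tor (ModuleCat.{u} R) i).obj (ModuleCat.of R M)).obj (ModuleCat.of R N)

/-- `Tor_i^R(M, N)` as a type (with its `R`-module structure given by instances below). -/
def TorM (R : Type u) [CommRing R] (i : ℕ) (M N : Type u) [AddCommGroup M] [Module R M]
    [AddCommGroup N] [Module R N] : Type u :=
  TorModCat R i M N

instance (R : Type u) [CommRing R] (i : ℕ) (M N : Type u) [AddCommGroup M] [Module R M]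
    [AddCommGroup N] [Module R N] : AddCommGroup (TorM R i M N) :=
  inferInstanceAs (AddCommGroup (TorModCat R i M N))

instance (R : Type u) [CommRing R] (i : ℕ) (M N : Type u) [AddCommGroup M] [Module R M]
    [AddCommGroup N] [Module R N] : Module R (TorM R i M N) :=
  inferInstanceAs (Module R (TorModCat R i M N))

/-- A regular local ring: noetherian local, whose maximal ideal is generated by a
(weakly) regular sequence. -/
def IsRegLocal (Q : Type u) [CommRing Q] : Prop :=
  IsNoetherianRing Q ∧ IsLocalRing Q ∧
    ∃ rs : List Q, RingTheory.Sequence.IsWeaklyRegular Q rs ∧ (∀ r ∈ rs, r ∈ nonunits Q) ∧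
      Ideal.span {x | x ∈ rs} = Ideal.span (nonunits Q)

/-- A (local) complete intersection: noetherian local ring whose completion is a regular
local ring modulo a regular sequence (of nonunits). -/
def IsCIRing (R : Type u) [CommRing R] : Prop :=
  IsNoetherianRing R ∧ IsLocalRing R ∧
    ∃ (Q : Type u) (_ : CommRing Q), IsRegLocal Q ∧
      ∃ rs : List Q, (∀ r ∈ rs, r ∈ nonunits Q) ∧ RingTheory.Sequence.IsWeaklyRegular Q rs ∧
        Nonempty ((Q ⧸ Ideal.span {x | x ∈ rs}) ≃+* AdicCompletion (Ideal.span (nonunits R)) R)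

/-- A hypersurface: noetherian local ring whose completion is a regular local ring modulo
a single non-zerodivisor in the maximal ideal. -/
def IsHypersurfaceRing (R : Type u) [CommRing R] : Prop :=
  IsNoetherianRing R ∧ IsLocalRing R ∧
    ∃ (Q : Type u) (_ : CommRing Q), IsRegLocal Q ∧
      ∃ f : Q, f ∈ nonunits Q ∧ f ∈ nonZeroDivisors Q ∧
        Nonempty ((Q ⧸ Ideal.span {f}) ≃+* AdicCompletion (Ideal.span (nonunits R)) R)

/-- Maximal Cohen-Macaulay module over a local ring: depth equals the Krull dimension. -/
def IsMCM (R : Type u) [CommRing R] (M : Type u) [AddCommGroup M] [Module R M] : Prop :=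
  (rdepth R M : WithBot ℕ∞) = ringKrullDim R

/-- Cohen-Macaulay local ring. -/
def IsCMLocalRing (A : Type u) [CommRing A] : Prop :=
  IsNoetherianRing A ∧ IsLocalRing A ∧ (rdepth A A : WithBot ℕ∞) = ringKrullDim A

/-- `M` has (constant) rank: free of the same rank at every minimal prime. -/
def HasRank (R : Type u) [CommRing R] (M : Type u) [AddCommGroup M] [Module R M] : Prop :=
  ∃ r : ℕ, ∀ (p : Ideal R) (hp : p.IsPrime), p ∈ minimalPrimes R →
    Nonempty ((LocalizedModule (@Ideal.primeCompl R _ p hp) M)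
      ≃ₗ[Localization (@Ideal.primeCompl R _ p hp)]
      (Fin r → Localization (@Ideal.primeCompl R _ p hp)))

/-- Projective dimension at most `n`. -/
def pdLE (R : Type u) [CommRing R] : ℕ → ∀ (M : Type u) [AddCommGroup M] [Module R M], Prop
  | 0, M, _, _ => Module.Projective R M
  | n+1, M, _, _ => ∃ (P : Type u) (_ : AddCommGroup P) (_ : Module R P),
      Module.Projective R P ∧ ∃ f : P →ₗ[R] M, Function.Surjective f ∧
        pdLE R n (LinearMap.ker f)

/-- Injective dimension at most `n`. -/
def idLE (R : Type u) [CommRing R] : ℕ → ∀ (M : Type u) [AddCommGroup M] [Module R M], Prop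
  | 0, M, _, _ => Module.Injective R M
  | n+1, M, _, _ => ∃ (I : Type u) (_ : AddCommGroup I) (_ : Module R I),
      Module.Injective R I ∧ ∃ f : M →ₗ[R] I, Function.Injective f ∧
        idLE R n (I ⧸ LinearMap.range f)

/-- Gorenstein local ring: noetherian local with finite self-injective dimension. -/
def IsGorensteinLocalRing (R : Type u) [CommRing R] : Prop :=
  IsNoetherianRing R ∧ IsLocalRing R ∧ ∃ n : ℕ, idLE R n R

/-- The map `M → R^ν` obtained from a free cover `ε : R^ν ↠ M^*` by dualizing and composing
with the biduality map; its cokernel is the pushforward `M₁`. -/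
def pushMap (R M : Type u) [CommRing R] [AddCommGroup M] [Module R M] {ν : ℕ}
    (ε : (Fin ν → R) →ₗ[R] Module.Dual R M) : M →ₗ[R] (Fin ν → R) where
  toFun m := fun i => ε (Pi.single i 1) m
  map_add' x y := by funext i; simp
  map_smul' r x := by funext i; simp

/-- Length of a module, as the Krull dimension of its lattice of submodules. -/
def mlen (R : Type u) [CommRing R] (M : Type u) [AddCommGroup M] [Module R M] :
    WithBot ℕ∞ :=
  Order.krullDim (Submodule R M)

/-- An unramified regular local ring: equicharacteristic (contains a field), or of mixed
characteristic `(0, p)` with `p` not in the square of the maximal ideal. -/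
def IsUnramifiedRegLocal (Q : Type u) [CommRing Q] : Prop :=
  IsRegLocal Q ∧
    ((∃ (K : Type u) (_ : Field K), Nonempty (K →+* Q)) ∨
     (CharZero Q ∧ ∃ p : ℕ, p.Prime ∧ (p : Q) ∈ nonunits Q ∧
        (p : Q) ∉ (Ideal.span (nonunits Q)) ^ 2))

/-- In a commutative ring, a nonzerodivisor does not lie in any minimal prime. -/
lemma aux_nzd_not_mem_minimal {R : Type u} [CommRing R] {q : Ideal R} [hq : q.IsPrime]
    (hmin : q ∈ minimalPrimes R) {r : R} (hr : r ∈ nonZeroDivisors R) : r ∉ q := by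
  intro hrq
  have hnil : IsNilpotent (algebraMap R (Localization q.primeCompl) r) :=
    absurd hr (Set.disjoint_left.mp (Ideal.disjoint_nonZeroDivisors_of_mem_minimalPrimes hmin) hrq)
  obtain ⟨n, hn⟩ := hnil
  rw [← map_pow] at hn
  obtain ⟨s, hs⟩ := (IsLocalization.map_eq_zero_iff q.primeCompl _ _).mp hn
  have hs0 : (s : R) = 0 := (pow_mem hr n).2 _ hs
  exact s.2 (hs0 ▸ q.zero_mem)

/-- over a noetherian local ring, `(S_1)` implies torsion-free. -/
theorem stmt0 (R : Type u) [CommRing R] [IsNoetherianRing R] [IsLocalRing R]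
    (M : Type u) [AddCommGroup M] [Module R M] [Module.Finite R M]
    (h : SerreCond R M 1) :
    ∀ r ∈ nonZeroDivisors R, ∀ x : M, r • x = 0 → x = 0 := by
  intro r hr x hrx
  by_contra hx0
  obtain ⟨p, hP, hle⟩ := exists_le_isAssociatedPrime_of_isNoetherianRing R x hx0
  obtain ⟨hp, y, hy⟩ := (isAssociatedPrime_iff).mp hP
  have hrp : r ∈ p :=
    hle (by rwa [Submodule.mem_colon_singleton, Submodule.mem_bot])
  -- `y/1` is nonzero in the localized module
  have hy1 : (LocalizedModule.mk y 1 : LocalizedModule p.primeCompl M) ≠ 0 := by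
    intro hzero
    rw [show (0 : LocalizedModule p.primeCompl M) = LocalizedModule.mk 0 1 from
      (LocalizedModule.zero_mk 1).symm, LocalizedModule.mk_eq] at hzero
    obtain ⟨u, hu⟩ := hzero
    simp only [one_smul, smul_zero] at hu
    exact u.2 (hy.ge (Submodule.mem_colon_singleton.mpr ((Submodule.mem_bot R).mpr hu)))
  have hnt : Nontrivial (LocalizedModule p.primeCompl M) := ⟨_, _, hy1⟩
  have hS := h p hp hnt
  -- the height of `p` is at least 1
  have hht : (1 : ℕ∞) ≤ Order.height (⟨p, hp⟩ : PrimeSpectrum R) := by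
    rw [ENat.one_le_iff_ne_zero, Ne, Order.height_eq_zero]
    intro hmin
    obtain ⟨q, hqmin, hqle⟩ := Ideal.exists_minimalPrimes_le (bot_le (a := p))
    haveI hq : q.IsPrime := hqmin.1.1
    have hpq : p ≤ q := hmin (show (⟨q, hq⟩ : PrimeSpectrum R) ≤ ⟨p, hp⟩ from hqle)
    exact aux_nzd_not_mem_minimal hqmin hr (hpq hrp)
  have hS1 : (1 : ℕ∞) ≤ rdepth (Localization.AtPrime p) (LocalizedModule p.primeCompl M) :=
    le_trans (le_min (by norm_cast) hht) hS
  -- but the depth of the localized module is zero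
  have hdepth : rdepth (Localization.AtPrime p) (LocalizedModule p.primeCompl M) ≤ 0 := by
    apply sSup_le
    rintro n ⟨rs, hlen, hnonunit, hreg⟩
    match rs, hlen with
    | [], hlen => exact hlen ▸ le_refl _
    | r' :: rs', hlen =>
      exfalso
      rw [isWeaklyRegular_cons_iff] at hreg
      obtain ⟨⟨a, s⟩, rfl⟩ := IsLocalization.mk'_surjective p.primeCompl r'
      have ha : a ∈ p := by
        by_contra ha
        exact (hnonunit _ List.mem_cons_self)
          ((IsLocalization.AtPrime.isUnit_mk'_iff _ p a s).mpr ha)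
      have hay : a • y = 0 := by
        rwa [hy, Submodule.mem_colon_singleton, Submodule.mem_bot] at ha
      have hsmul : IsLocalization.mk' (Localization.AtPrime p) a s •
          (LocalizedModule.mk y 1 : LocalizedModule p.primeCompl M) = 0 := by
        rw [← Localization.mk_eq_mk', LocalizedModule.mk_smul_mk, hay, LocalizedModule.zero_mk]
      refine hy1 (hreg.1 ?_)
      show _ • _ = _ • (0 : LocalizedModule p.primeCompl M)
      rw [hsmul, smul_zero]
  exact absurd (hS1.trans hdepth) (by simp)

end
end

section
/- Let R be a commutative noetherian local ring and M, N nonzero finitely generated R-modules such that M ⊗_R N is torsion-free. Then M ⊗_R N ≅ M ⊗_R (N/t_R N). Moreover, if Tor_1^R(M, N/t_R N) = 0, then t_R N = 0, i.e., N is torsion-free. -/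
open RingTheory.Sequence CategoryTheory

universe u

noncomputable section

section AuxiliaryForStmt6

open CategoryTheory.Limits MonoidalCategory

namespace MyRes

variable {C : Type*} [Category C] [Abelian C] [EnoughProjectives C]

def cpx {Z P₀ P₁ : C} (π : P₀ ⟶ Z) (d₀ : P₁ ⟶ P₀) : ChainComplex C ℕ :=
  ChainComplex.mk P₀ P₁ (Projective.syzygies d₀) d₀ (Projective.d d₀) (by dsimp only [Projective.d]; erw [Category.assoc, kernel.condition, comp_zero])
    (fun S => ⟨Projective.syzygies S.f, Projective.d S.f, by dsimp only [Projective.d]; erw [Category.assoc, kernel.condition, comp_zero]⟩)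

variable {Z P₀ P₁ : C} (π : P₀ ⟶ Z) (d₀ : P₁ ⟶ P₀)

lemma cpx_d_1_0 : (cpx π d₀).d 1 0 = d₀ := by
  simp [cpx]

lemma cpx_d_2_1 : (cpx π d₀).d 2 1 = Projective.d d₀ := by
  simp [cpx]

lemma cpx_exactAt_succ (n : ℕ) : (cpx π d₀).ExactAt (n + 1) := by
  rw [HomologicalComplex.exactAt_iff' _ (n + 1 + 1) (n + 1) n (by simp) (by simp)]
  match n with
  | 0 =>
    refine ShortComplex.exact_of_iso ?_ (CategoryTheory.exact_d_f d₀)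
    exact ShortComplex.isoMk (Iso.refl _) (Iso.refl _) (Iso.refl _)
      (by simp [cpx_d_2_1]; erw [Category.id_comp, Category.comp_id])
      (by simp [cpx_d_1_0]; erw [Category.id_comp, Category.comp_id])
  | m + 1 =>
    refine ShortComplex.exact_of_iso ?_
      (CategoryTheory.exact_d_f ((cpx π d₀).d (m + 2) (m + 1)))
    refine ShortComplex.isoMk (ChainComplex.mkXIso P₀ P₁ (Projective.syzygies d₀) d₀
      (Projective.d d₀) (by dsimp only [Projective.d]; erw [Category.assoc, kernel.condition, comp_zero])
      (fun S => ⟨Projective.syzygies S.f, Projective.d S.f, by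
        dsimp only [Projective.d]; erw [Category.assoc, kernel.condition, comp_zero]⟩) m).symm
      (Iso.refl _) (Iso.refl _) ?_ ?_
    · refine Eq.trans ?_ (Category.comp_id _).symm
      refine (congrArg _ (ChainComplex.mk_d _ _ _ _ _ _ _ m)).trans ?_
      exact Iso.inv_hom_id_assoc _ _
    · exact (Category.id_comp _).trans (Category.comp_id _).symm

instance [Projective P₀] [Projective P₁] (n : ℕ) : Projective ((cpx π d₀).X n) := by
  obtain (_ | _ | _ | n) := n
  · exact (inferInstance : Projective P₀)
  · exact (inferInstance : Projective P₁)
  · apply Projective.projective_over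
  · apply Projective.projective_over

def res [Projective P₀] [Projective P₁] [Epi π] (hd : d₀ ≫ π = 0)
    (hex : (ShortComplex.mk d₀ π hd).Exact) : ProjectiveResolution Z where
  complex := cpx π d₀
  π := (ChainComplex.toSingle₀Equiv _ _).symm ⟨π, by rw [cpx_d_1_0]; exact hd⟩
  quasiIso := ⟨fun n => by
    cases n
    · rw [ChainComplex.quasiIsoAt₀_iff, ShortComplex.quasiIso_iff_of_zeros']
      · refine (ShortComplex.exact_and_epi_g_iff_of_iso ?_).2 ⟨hex, by dsimp; infer_instance⟩
        exact ShortComplex.isoMk (Iso.refl _) (Iso.refl _) (Iso.refl _)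
          (by simp [cpx_d_1_0]; erw [Category.id_comp, Category.comp_id]) (by simp [ChainComplex.toSingle₀Equiv]; erw [Category.id_comp, Category.comp_id, HomologicalComplex.mkHomToSingle_f]; erw [Category.comp_id])
      all_goals rfl
    · rw [quasiIsoAt_iff_exactAt']
      · apply cpx_exactAt_succ
      · apply ChainComplex.exactAt_succ_single_obj⟩

end MyRes

/-- Key lemma: vanishing of `Tor₁(M, C)` makes `M ⊗ K → M ⊗ F` injective for a free
presentation `0 → K → F → C → 0`. -/
lemma key (R : Type u) [CommRing R]
    (M : Type u) [AddCommGroup M] [Module R M]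
    (C : Type u) [AddCommGroup C] [Module R C]
    {n : ℕ} (q : (Fin n → R) →ₗ[R] C) (hq : Function.Surjective q)
    {m : ℕ} (e : (Fin m → R) →ₗ[R] LinearMap.ker q) (he : Function.Surjective e)
    (h1 : Subsingleton (TorM R 1 M C)) :
    Function.Injective (LinearMap.lTensor M (LinearMap.ker q).subtype) := by
  classical
  let K := LinearMap.ker q
  let ι : K →ₗ[R] (Fin n → R) := K.subtype
  let F₀ : ModuleCat.{u} R := ModuleCat.of R (Fin n → R)
  let F₁ : ModuleCat.{u} R := ModuleCat.of R (Fin m → R)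
  let Cc : ModuleCat.{u} R := ModuleCat.of R C
  let d₀ : F₁ ⟶ F₀ := ModuleCat.ofHom (ι ∘ₗ e)
  let πc : F₀ ⟶ Cc := ModuleCat.ofHom q
  haveI : Projective F₀ := ModuleCat.projective_of_free (Pi.basisFun R (Fin n))
  haveI : Projective F₁ := ModuleCat.projective_of_free (Pi.basisFun R (Fin m))
  haveI : Epi πc := (ModuleCat.epi_iff_surjective _).2 hq
  have hd : d₀ ≫ πc = 0 := by
    apply ModuleCat.hom_ext; apply LinearMap.ext; intro x
    exact (e x).2
  have hex : (ShortComplex.mk d₀ πc hd).Exact := by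
    rw [ShortComplex.moduleCat_exact_iff]
    intro x hx
    obtain ⟨y, hy⟩ := he ⟨x, by exact hx⟩
    exact ⟨y, congrArg Subtype.val hy⟩
  let P : ProjectiveResolution Cc := MyRes.res πc d₀ hd hex
  let T := (tensoringLeft (ModuleCat.{u} R)).obj (ModuleCat.of R M)
  have iso : TorModCat R 1 M C ≅
      (HomologicalComplex.homologyFunctor (ModuleCat.{u} R) _ 1).obj
        ((T.mapHomologicalComplex _).obj P.complex) :=
    P.isoLeftDerivedObj T 1
  haveI hss : Subsingleton (TorModCat R 1 M C) := h1
  have hz : IsZero ((HomologicalComplex.homologyFunctor (ModuleCat.{u} R) _ 1).obj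
      ((T.mapHomologicalComplex _).obj P.complex)) :=
    (ModuleCat.isZero_of_subsingleton _).of_iso iso.symm
  have hEx : ((T.mapHomologicalComplex _).obj P.complex).ExactAt 1 := by
    rw [HomologicalComplex.exactAt_iff_isZero_homology]
    exact hz
  rw [HomologicalComplex.exactAt_iff' _ 2 1 0 (by simp) (by simp)] at hEx
  rw [ShortComplex.moduleCat_exact_iff] at hEx
  -- now transfer to linear maps
  have hd10 : ((T.mapHomologicalComplex _).obj P.complex).d 1 0 = T.map d₀ := by
    rw [Functor.mapHomologicalComplex_obj_d]
    exact congrArg T.map (MyRes.cpx_d_1_0 πc d₀)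
  have hd21 : ((T.mapHomologicalComplex _).obj P.complex).d 2 1 =
      T.map (Projective.d d₀) := by
    rw [Functor.mapHomologicalComplex_obj_d]
    exact congrArg T.map (MyRes.cpx_d_2_1 πc d₀)
  rw [injective_iff_map_eq_zero]
  intro x hx
  obtain ⟨y, rfl⟩ := LinearMap.lTensor_surjective M he x
  have h10 : LinearMap.lTensor M (ι ∘ₗ e) y = 0 := by
    rw [LinearMap.lTensor_comp, LinearMap.comp_apply]
    exact hx
  have h10' : (((T.mapHomologicalComplex _).obj P.complex).d 1 0) y = 0 := by
    rw [hd10]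
    exact (LinearMap.congr_fun (ModuleCat.hom_whiskerLeft (ModuleCat.of R M) d₀) y).trans h10
  obtain ⟨z, hz'⟩ := hEx y h10'
  have hz2 : ((T.mapHomologicalComplex _).obj P.complex).d 2 1 z = y := hz'
  rw [hd21] at hz2
  have hzl : LinearMap.lTensor M (Projective.d d₀).hom z = y :=
    (LinearMap.congr_fun (ModuleCat.hom_whiskerLeft (ModuleCat.of R M) (Projective.d d₀)) z).symm.trans hz2
  -- hz' : T.map (Projective.d d₀) z = y
  have he0 : e ∘ₗ (Projective.d d₀).hom = 0 := by
    apply LinearMap.ext; intro w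
    have : (Projective.d d₀ ≫ d₀) w = 0 := by
      rw [show Projective.d d₀ ≫ d₀ = 0 by
        dsimp only [Projective.d]; erw [Category.assoc, kernel.condition, comp_zero]]
      rfl
    exact Subtype.ext this
  calc LinearMap.lTensor M e y
      = LinearMap.lTensor M e (LinearMap.lTensor M (Projective.d d₀).hom z) := by
        rw [hzl]
    _ = LinearMap.lTensor M (e ∘ₗ (Projective.d d₀).hom) z := by
        rw [LinearMap.lTensor_comp]
        rfl
    _ = 0 := by rw [he0, LinearMap.lTensor_zero]; rfl

end AuxiliaryForStmt6

/-- if `M ⊗ N` is torsion-free then `M ⊗ N ≅ M ⊗ (N/tN)`; moreover if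
`Tor_1(M, N/tN) = 0` then `N` is torsion-free. -/

theorem stmt6 (R : Type u) [CommRing R] [IsNoetherianRing R] [IsLocalRing R]
    (M N : Type u) [AddCommGroup M] [Module R M] [Module.Finite R M] [Nontrivial M]
    [AddCommGroup N] [Module R N] [Module.Finite R N] [Nontrivial N]
    (htf : Submodule.torsion R (TensorProduct R M N) = ⊥) :
    Nonempty ((TensorProduct R M N) ≃ₗ[R]
      (TensorProduct R M (N ⧸ Submodule.torsion R N))) ∧
    (Subsingleton (TorM R 1 M (N ⧸ Submodule.torsion R N)) →
      Submodule.torsion R N = ⊥) := by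
  classical
  -- the image of M ⊗ tN in M ⊗ N is torsion
  have hrange : ∀ x : TensorProduct R M (Submodule.torsion R N),
      LinearMap.lTensor M (Submodule.torsion R N).subtype x
        ∈ Submodule.torsion R (TensorProduct R M N) := by
    intro x
    induction x using TensorProduct.induction_on with
    | zero => simp
    | tmul a t =>
      rw [Submodule.mem_torsion_iff]
      obtain ⟨c, hc⟩ := (Submodule.mem_torsion_iff (R := R) (t : N)).mp t.2
      refine ⟨c, ?_⟩
      rw [LinearMap.lTensor_tmul, Submodule.subtype_apply, Submonoid.smul_def,
        ← TensorProduct.tmul_smul, ← Submonoid.smul_def, hc, TensorProduct.tmul_zero]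
    | add x y hx hy => rw [map_add]; exact Submodule.add_mem _ hx hy
  -- consequently the map M ⊗ tN → M ⊗ N is zero
  have hzero : ∀ x : TensorProduct R M (Submodule.torsion R N),
      LinearMap.lTensor M (Submodule.torsion R N).subtype x = 0 := by
    intro x
    have := hrange x
    rwa [htf, Submodule.mem_bot] at this
  -- the induced map M ⊗ N → M ⊗ (N/tN) is bijective
  have hker : LinearMap.ker (LinearMap.lTensor M (Submodule.torsion R N).mkQ) = ⊥ := by
    rw [lTensor_mkQ]
    rw [eq_bot_iff]
    rintro x ⟨y, rfl⟩
    rw [Submodule.mem_bot]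
    exact hzero y
  have hsurj : Function.Surjective (LinearMap.lTensor M (Submodule.torsion R N).mkQ) :=
    LinearMap.lTensor_surjective M (Submodule.mkQ_surjective _)
  refine ⟨⟨LinearEquiv.ofBijective (LinearMap.lTensor M (Submodule.torsion R N).mkQ)
    ⟨LinearMap.ker_eq_bot.1 hker, hsurj⟩⟩, ?_⟩
  -- part 2
  intro h1
  obtain ⟨n, p, hp⟩ := Module.Finite.exists_fin' R N
  set q : (Fin n → R) →ₗ[R] (N ⧸ Submodule.torsion R N) :=
    (Submodule.torsion R N).mkQ ∘ₗ p with hqdef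
  have hq : Function.Surjective q := (Submodule.mkQ_surjective _).comp hp
  haveI : Module.Finite R (LinearMap.ker q) :=
    Module.Finite.iff_fg.2 (IsNoetherian.noetherian _)
  obtain ⟨m', e, he⟩ := Module.Finite.exists_fin' R (LinearMap.ker q)
  have hinj := key R M _ q hq e he h1
  -- notation
  set K := LinearMap.ker q with hK
  set L := LinearMap.ker p with hL
  have hLK : L ≤ K := by
    intro x hx
    have : p x = 0 := hx
    show q x = 0
    rw [hqdef, LinearMap.comp_apply, this, map_zero]
  set κ : L →ₗ[R] K := Submodule.inclusion hLK with hκ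
  have hmemT : ∀ k : K, p k.1 ∈ Submodule.torsion R N := by
    rintro ⟨x, hx⟩
    have hthis : q x = 0 := hx
    rw [hqdef, LinearMap.comp_apply, Submodule.mkQ_apply,
      Submodule.Quotient.mk_eq_zero] at hthis
    exact hthis
  set p' : K →ₗ[R] (Submodule.torsion R N) :=
    LinearMap.codRestrict (Submodule.torsion R N) (p ∘ₗ K.subtype) hmemT with hp'def
  have hp'surj : Function.Surjective p' := by
    rintro ⟨t, ht⟩
    obtain ⟨x, hx⟩ := hp t
    have hxK : x ∈ K := by
      show q x = 0
      rw [hqdef, LinearMap.comp_apply, hx, Submodule.mkQ_apply,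
        Submodule.Quotient.mk_eq_zero]
      exact ht
    exact ⟨⟨x, hxK⟩, Subtype.ext hx⟩
  -- exactness facts
  have exact2 : Function.Exact (L.subtype) p := by
    intro y
    constructor
    · intro hy
      exact ⟨⟨y, hy⟩, rfl⟩
    · rintro ⟨⟨z, hz⟩, rfl⟩
      exact hz
  have texact2 := lTensor_exact (f := L.subtype) (g := p) M exact2 hp
  -- injectivity of M ⊗ tN → M ⊗ N
  have hfinj : ∀ x : TensorProduct R M (Submodule.torsion R N),
      LinearMap.lTensor M (Submodule.torsion R N).subtype x = 0 → x = 0 := by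
    intro x hx0
    obtain ⟨y, rfl⟩ := LinearMap.lTensor_surjective M hp'surj x
    have hcomm : p ∘ₗ K.subtype = (Submodule.torsion R N).subtype ∘ₗ p' :=
      (LinearMap.subtype_comp_codRestrict _ _ _).symm
    have h1' : LinearMap.lTensor M p (LinearMap.lTensor M K.subtype y) = 0 := by
      rw [← LinearMap.comp_apply, ← LinearMap.lTensor_comp, hcomm, LinearMap.lTensor_comp,
        LinearMap.comp_apply]
      exact hx0
    obtain ⟨z, hz⟩ := (texact2 _).1 h1'
    have hzz : LinearMap.lTensor M K.subtype (LinearMap.lTensor M κ z)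
        = LinearMap.lTensor M K.subtype y := by
      rw [← LinearMap.comp_apply, ← LinearMap.lTensor_comp]
      have : K.subtype ∘ₗ κ = L.subtype := rfl
      rw [this]
      exact hz
    have hy : LinearMap.lTensor M κ z = y := hinj hzz
    rw [← hy, ← LinearMap.comp_apply, ← LinearMap.lTensor_comp]
    have hpκ : p' ∘ₗ κ = 0 := by
      apply LinearMap.ext
      rintro ⟨l, hl⟩
      exact Subtype.ext hl
    rw [hpκ, LinearMap.lTensor_zero, LinearMap.zero_apply]
  have hMT : Subsingleton (TensorProduct R M (Submodule.torsion R N)) :=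
    ⟨fun a b => (hfinj a (hzero a)).trans (hfinj b (hzero b)).symm⟩
  -- Nakayama: M ⊗ T = 0 and M ≠ 0 imply T = 0
  haveI : Module.Finite R (Submodule.torsion R N) :=
    Module.Finite.iff_fg.2 (IsNoetherian.noetherian _)
  set k := IsLocalRing.ResidueField R with hk
  haveI : Subsingleton (TensorProduct R k (TensorProduct R M (Submodule.torsion R N))) := by
    constructor
    intro a b
    have hall : ∀ z : TensorProduct R k (TensorProduct R M (Submodule.torsion R N)), z = 0 := by
      intro z
      induction z using TensorProduct.induction_on with
      | zero => rfl
      | tmul a t => rw [Subsingleton.elim t 0, TensorProduct.tmul_zero]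
      | add x y hx hy => rw [hx, hy, add_zero]
    rw [hall a, hall b]
  haveI hVT : Subsingleton (TensorProduct R (TensorProduct R k M) (Submodule.torsion R N)) :=
    (TensorProduct.assoc R k M (Submodule.torsion R N)).toEquiv.subsingleton
  haveI : Nontrivial (TensorProduct R k M) := by
    rw [← not_subsingleton_iff_nontrivial]
    intro hs
    haveI := hs
    haveI := (IsLocalRing.subsingleton_tensorProduct (M := M)).1 hs
    exact not_subsingleton_iff_nontrivial.2 ‹Nontrivial M› ‹Subsingleton M›
  -- a surjective R-linear functional on k ⊗ M
  set V := TensorProduct R k M with hV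
  obtain ⟨i⟩ := (Module.Free.chooseBasis k V).index_nonempty
  set b := Module.Free.chooseBasis k V with hb
  set φ : V →ₗ[k] k := b.coord i with hφ
  have hφsurj : Function.Surjective φ := by
    intro c
    refine ⟨c • b i, ?_⟩
    rw [hφ, map_smul, Module.Basis.coord_apply, Module.Basis.repr_self]
    simp
  set φR : V →ₗ[R] k := φ.restrictScalars R with hφR
  have hφRsurj : Function.Surjective φR := hφsurj
  have hsurjT : Function.Surjective
      (LinearMap.rTensor (Submodule.torsion R N) φR) :=
    LinearMap.rTensor_surjective _ hφRsurj
  haveI : Subsingleton (TensorProduct R k (Submodule.torsion R N)) := by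
    constructor
    intro a b
    obtain ⟨x, rfl⟩ := hsurjT a
    obtain ⟨y, rfl⟩ := hsurjT b
    rw [Subsingleton.elim x y]
  haveI : Subsingleton (Submodule.torsion R N) :=
    (IsLocalRing.subsingleton_tensorProduct (M := Submodule.torsion R N)).1 ‹_›
  exact Submodule.eq_bot_of_subsingleton

end
end
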